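/- Let f : R^d → R be a continuous convex function, V a positive definite d×d matrix, b > 0, and E = {θ : ‖θ − θ₀‖_V ≤ b} the corresponding ellipsoid, where ‖x‖_V = √(xᵀVx). If θ̃ ∼ N(θ₀, b²V⁻¹), then P[f(θ̃) ≥ max_{θ∈E} f(θ)] ≥ 1/(4√(eπ)). -/

import Mathlib

open MeasureTheory ProbabilityTheory Matrix
open scoped NNReal ENNReal

section Aux
open Real
open scoped ENNReal NNReal

open MeasureTheory ProbabilityTheory Real
open scoped ENNReal NNReal

lemma real_gauss_conv {α γ : ℝ} (hα : 0 < α) (hγ : 0 < γ) (t : ℝ) :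
    ∫ x : ℝ, ((Real.sqrt (2 * π * α))⁻¹ * rexp (-(x - 0) ^ 2 / (2 * α)))
        * ((Real.sqrt (2 * π * γ))⁻¹ * rexp (-(t - x - 0) ^ 2 / (2 * γ)))
      = (Real.sqrt (2 * π * (α + γ)))⁻¹ * rexp (-(t - 0) ^ 2 / (2 * (α + γ))) := by
  have hπ := Real.pi_pos
  have hk : (0:ℝ) < (α + γ) / (2 * α * γ) := by positivity
  have key : ∀ x : ℝ, ((Real.sqrt (2 * π * α))⁻¹ * rexp (-(x - 0) ^ 2 / (2 * α)))
        * ((Real.sqrt (2 * π * γ))⁻¹ * rexp (-(t - x - 0) ^ 2 / (2 * γ)))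
      = ((Real.sqrt (2 * π * α))⁻¹ * (Real.sqrt (2 * π * γ))⁻¹
          * rexp (- t ^ 2 / (2 * (α + γ))))
        * rexp (-((α + γ) / (2 * α * γ)) * (x - α * t / (α + γ)) ^ 2) := by
    intro x
    rw [mul_mul_mul_comm, ← Real.exp_add,
      mul_assoc ((Real.sqrt (2 * π * α))⁻¹ * (Real.sqrt (2 * π * γ))⁻¹), ← Real.exp_add]
    congr 1
    congr 1
    field_simp
    ring
  simp_rw [key]
  rw [MeasureTheory.integral_const_mul]
  have h2 : ∫ x : ℝ, rexp (-((α + γ) / (2 * α * γ)) * (x - α * t / (α + γ)) ^ 2)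
      = Real.sqrt (π / ((α + γ) / (2 * α * γ))) := by
    rw [← integral_gaussian ((α + γ) / (2 * α * γ))]
    exact MeasureTheory.integral_sub_right_eq_self
      (fun x => rexp (-((α + γ) / (2 * α * γ)) * x ^ 2)) _
  rw [h2]
  have hsqrt : (Real.sqrt (2 * π * α))⁻¹ * (Real.sqrt (2 * π * γ))⁻¹
      * Real.sqrt (π / ((α + γ) / (2 * α * γ)))
      = (Real.sqrt (2 * π * (α + γ)))⁻¹ := by
    rw [← Real.sqrt_inv, ← Real.sqrt_inv, ← Real.sqrt_inv,
      ← Real.sqrt_mul (by positivity), ← Real.sqrt_mul (by positivity)]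
    congr 1
    field_simp
  calc ((Real.sqrt (2 * π * α))⁻¹ * (Real.sqrt (2 * π * γ))⁻¹
          * rexp (- t ^ 2 / (2 * (α + γ))))
        * Real.sqrt (π / ((α + γ) / (2 * α * γ)))
      = ((Real.sqrt (2 * π * α))⁻¹ * (Real.sqrt (2 * π * γ))⁻¹
          * Real.sqrt (π / ((α + γ) / (2 * α * γ)))) * rexp (- t ^ 2 / (2 * (α + γ))) := by
        ring
    _ = (Real.sqrt (2 * π * (α + γ)))⁻¹ * rexp (-(t - 0) ^ 2 / (2 * (α + γ))) := by
        rw [hsqrt, sub_zero]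

lemma gaussianPDFReal_conv {a c : ℝ≥0} (ha : a ≠ 0) (hc : c ≠ 0) (t : ℝ) :
    ∫ x : ℝ, gaussianPDFReal 0 a x * gaussianPDFReal 0 c (t - x)
      = gaussianPDFReal 0 (a + c) t := by
  have hα : (0:ℝ) < a := lt_of_le_of_ne a.coe_nonneg (by exact_mod_cast Ne.symm ha)
  have hγ : (0:ℝ) < c := lt_of_le_of_ne c.coe_nonneg (by exact_mod_cast Ne.symm hc)
  have := real_gauss_conv hα hγ t
  unfold gaussianPDFReal
  push_cast
  convert this using 2

lemma gaussianPDF_conv {a c : ℝ≥0} (ha : a ≠ 0) (hc : c ≠ 0) (t : ℝ) :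
    ∫⁻ x : ℝ, gaussianPDF 0 a x * gaussianPDF 0 c (t - x)
      = gaussianPDF 0 (a + c) t := by
  have hα : (0:ℝ) < a := lt_of_le_of_ne a.coe_nonneg (by exact_mod_cast Ne.symm ha)
  have hγ : (0:ℝ) < c := lt_of_le_of_ne c.coe_nonneg (by exact_mod_cast Ne.symm hc)
  simp only [gaussianPDF]
  have hnn : ∀ x : ℝ, 0 ≤ gaussianPDFReal 0 c (t - x) :=
    fun x => gaussianPDFReal_nonneg 0 c (t - x)
  have h1 : ∀ x : ℝ, ENNReal.ofReal (gaussianPDFReal 0 a x)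
      * ENNReal.ofReal (gaussianPDFReal 0 c (t - x))
      = ENNReal.ofReal (gaussianPDFReal 0 a x * gaussianPDFReal 0 c (t - x)) := by
    intro x
    rw [← ENNReal.ofReal_mul (gaussianPDFReal_nonneg 0 a x)]
  simp_rw [h1]
  rw [← MeasureTheory.ofReal_integral_eq_lintegral_ofReal, gaussianPDFReal_conv ha hc t]
  · -- integrability
    have hcont : Continuous (fun x : ℝ => gaussianPDFReal 0 c (t - x)) := by
      unfold gaussianPDFReal
      fun_prop
    have hle : ∀ x : ℝ, gaussianPDFReal 0 c (t - x) ≤ (Real.sqrt (2 * π * (c:ℝ)))⁻¹ := by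
      intro x
      unfold gaussianPDFReal
      calc (Real.sqrt (2 * π * (c:ℝ)))⁻¹ * rexp (-(t - x - 0) ^ 2 / (2 * (c:ℝ)))
          ≤ (Real.sqrt (2 * π * (c:ℝ)))⁻¹ * 1 := by
            have h1 : rexp (-(t - x - 0) ^ 2 / (2 * (c:ℝ))) ≤ 1 := by
              rw [Real.exp_le_one_iff, neg_div]
              exact neg_nonpos.mpr (by positivity)
            exact mul_le_mul_of_nonneg_left h1 (by positivity)
        _ = (Real.sqrt (2 * π * (c:ℝ)))⁻¹ := mul_one _
    have hg : Integrable (fun x : ℝ => (Real.sqrt (2 * π * (c:ℝ)))⁻¹ * gaussianPDFReal 0 a x) :=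
      (integrable_gaussianPDFReal 0 a).const_mul _
    refine hg.mono (((measurable_gaussianPDFReal 0 a).mul hcont.measurable).aestronglyMeasurable)
      (ae_of_all _ fun x => ?_)
    rw [Real.norm_eq_abs, Real.norm_eq_abs,
      abs_of_nonneg (mul_nonneg (gaussianPDFReal_nonneg 0 a x) (hnn x)),
      abs_of_nonneg (mul_nonneg (by positivity) (gaussianPDFReal_nonneg 0 a x))]
    rw [mul_comm ((Real.sqrt (2 * π * (c:ℝ)))⁻¹)]
    exact mul_le_mul_of_nonneg_left (hle x) (gaussianPDFReal_nonneg 0 a x)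
  · exact ae_of_all _ (fun x => mul_nonneg (gaussianPDFReal_nonneg 0 a x) (hnn x))

lemma gaussianReal_conv_map {a c : ℝ≥0} (ha : a ≠ 0) (hc : c ≠ 0) :
    Measure.map (fun p : ℝ × ℝ => p.1 + p.2) ((gaussianReal 0 a).prod (gaussianReal 0 c))
      = gaussianReal 0 (a + c) := by
  have hac : a + c ≠ 0 := by
    intro h
    exact ha (by simpa using (add_eq_zero.mp h).1)
  ext s hs
  rw [Measure.map_apply measurable_add hs,
    Measure.prod_apply (measurable_add hs)]
  -- slice sets
  have hslice : ∀ x : ℝ,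
      gaussianReal 0 c (Prod.mk x ⁻¹' ((fun p : ℝ × ℝ => p.1 + p.2) ⁻¹' s))
        = ∫⁻ y, ((fun y => x + y) ⁻¹' s).indicator (gaussianPDF 0 c) y := by
    intro x
    have h1 : (Prod.mk x ⁻¹' ((fun p : ℝ × ℝ => p.1 + p.2) ⁻¹' s))
        = (fun y => x + y) ⁻¹' s := rfl
    rw [h1, gaussianReal_apply 0 hc, ← lintegral_indicator (hs.preimage (measurable_const_add x)) _]
  simp_rw [hslice]
  -- rewrite indicator composed with translation
  have hind : ∀ x y : ℝ, ((fun y => x + y) ⁻¹' s).indicator (gaussianPDF 0 c) y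
      = s.indicator (fun u => gaussianPDF 0 c (u - x)) (x + y) := by
    intro x y
    by_cases hy : x + y ∈ s
    · rw [Set.indicator_of_mem hy, Set.indicator_of_mem (by exact hy)]
      simp
    · rw [Set.indicator_of_notMem hy, Set.indicator_of_notMem (by exact hy)]
  have htrans : ∀ x : ℝ, (∫⁻ y, ((fun y => x + y) ⁻¹' s).indicator (gaussianPDF 0 c) y)
      = ∫⁻ t, s.indicator (fun u => gaussianPDF 0 c (u - x)) t := by
    intro x
    simp_rw [hind x]
    exact lintegral_add_left_eq_self (s.indicator (fun u => gaussianPDF 0 c (u - x))) x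
  simp_rw [htrans]
  -- uncurried measurability
  have hmF : Measurable (fun p : ℝ × ℝ =>
      s.indicator (fun u => gaussianPDF 0 c (u - p.1)) p.2) := by
    have heq : (fun p : ℝ × ℝ => s.indicator (fun u => gaussianPDF 0 c (u - p.1)) p.2)
        = (Set.univ ×ˢ s).indicator (fun p : ℝ × ℝ => gaussianPDF 0 c (p.2 - p.1)) := by
      ext p
      by_cases hp : p.2 ∈ s
      · rw [Set.indicator_of_mem hp, Set.indicator_of_mem (by simp [hp])]
      · rw [Set.indicator_of_notMem hp, Set.indicator_of_notMem (by simp [hp])]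
    rw [heq]
    exact ((measurable_gaussianPDF 0 c).comp (measurable_snd.sub measurable_fst)).indicator
      (MeasurableSet.univ.prod hs)
  have hinner_meas : Measurable (fun x : ℝ =>
      ∫⁻ t, s.indicator (fun u => gaussianPDF 0 c (u - x)) t) :=
    hmF.lintegral_prod_right'
  rw [gaussianReal_of_var_ne_zero 0 ha,
    lintegral_withDensity_eq_lintegral_mul _ (measurable_gaussianPDF 0 a) hinner_meas]
  simp only [Pi.mul_apply]
  have hmul : ∀ x : ℝ, gaussianPDF 0 a x * ∫⁻ t, s.indicator (fun u => gaussianPDF 0 c (u - x)) t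
      = ∫⁻ t, gaussianPDF 0 a x * s.indicator (fun u => gaussianPDF 0 c (u - x)) t := by
    intro x
    have hmx : Measurable (fun u : ℝ => gaussianPDF 0 c (u - x)) :=
      (measurable_gaussianPDF 0 c).comp (measurable_id.sub measurable_const)
    rw [← lintegral_const_mul _ (hmx.indicator hs)]
  simp_rw [hmul]
  rw [lintegral_lintegral_swap]
  swap
  · exact ((measurable_gaussianPDF 0 a).comp measurable_fst).mul hmF |>.aemeasurable
  have hfinal : ∀ t : ℝ,
      (∫⁻ x, gaussianPDF 0 a x * s.indicator (fun u => gaussianPDF 0 c (u - x)) t)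
        = s.indicator (gaussianPDF 0 (a + c)) t := by
    intro t
    by_cases ht : t ∈ s
    · simp only [Set.indicator_of_mem ht]
      exact gaussianPDF_conv ha hc t
    · simp only [Set.indicator_of_notMem ht, mul_zero, lintegral_zero]
  simp_rw [hfinal]
  rw [lintegral_indicator hs]
  exact (gaussianReal_apply 0 hac s).symm

lemma gaussian_add_indep {Ω : Type*} [MeasurableSpace Ω] {μ : Measure Ω} [IsProbabilityMeasure μ]
    {X Y : Ω → ℝ} (hX : Measurable X) (hY : Measurable Y) (hXY : IndepFun X Y μ)
    {a c : ℝ≥0} (ha : Measure.map X μ = gaussianReal 0 a)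
    (hc : Measure.map Y μ = gaussianReal 0 c) :
    Measure.map (fun ω => X ω + Y ω) μ = gaussianReal 0 (a + c) := by
  by_cases ha0 : a = 0
  · -- X = 0 a.e.
    have hX0 : ∀ᵐ ω ∂μ, X ω = 0 := by
      have : μ (X ⁻¹' {0}ᶜ) = 0 := by
        rw [← Measure.map_apply hX (MeasurableSet.singleton (0:ℝ)).compl, ha, ha0,
          gaussianReal_zero_var]
        simp
      exact ae_iff.mpr this
    have : (fun ω => X ω + Y ω) =ᵐ[μ] Y := by
      filter_upwards [hX0] with ω hω
      simp [hω]
    rw [Measure.map_congr this, hc, ha0, zero_add]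
  by_cases hc0 : c = 0
  · have hY0 : ∀ᵐ ω ∂μ, Y ω = 0 := by
      have : μ (Y ⁻¹' {0}ᶜ) = 0 := by
        rw [← Measure.map_apply hY (MeasurableSet.singleton (0:ℝ)).compl, hc, hc0,
          gaussianReal_zero_var]
        simp
      exact ae_iff.mpr this
    have : (fun ω => X ω + Y ω) =ᵐ[μ] X := by
      filter_upwards [hY0] with ω hω
      simp [hω]
    rw [Measure.map_congr this, ha, hc0, add_zero]
  have hpair : Measure.map (fun ω => (X ω, Y ω)) μ
      = (gaussianReal 0 a).prod (gaussianReal 0 c) := by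
    rw [← ha, ← hc]
    exact (indepFun_iff_map_prod_eq_prod_map_map hX.aemeasurable hY.aemeasurable).mp hXY
  have : (fun ω => X ω + Y ω) = (fun p : ℝ × ℝ => p.1 + p.2) ∘ (fun ω => (X ω, Y ω)) := rfl
  rw [this, ← Measure.map_map measurable_add (hX.prodMk hY), hpair,
    gaussianReal_conv_map ha0 hc0]

lemma gaussian_sum {Ω : Type*} [MeasurableSpace Ω] {μ : Measure Ω} [IsProbabilityMeasure μ]
    {ι : Type*} [DecidableEq ι] (X : ι → Ω → ℝ) (hX : ∀ i, Measurable (X i))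
    (hindep : iIndepFun X μ)
    (va : ι → ℝ≥0) (hlaw : ∀ i, Measure.map (X i) μ = gaussianReal 0 (va i))
    (s : Finset ι) :
    Measure.map (fun ω => ∑ i ∈ s, X i ω) μ = gaussianReal 0 (∑ i ∈ s, va i) := by
  induction s using Finset.induction_on with
  | empty =>
    simp only [Finset.sum_empty]
    rw [Measure.map_const, ← gaussianReal_zero_var 0]
    simp
  | insert j t hnotmem ih =>
    have hsum : Measurable (fun ω => ∑ i ∈ t, X i ω) := by
      apply Finset.measurable_sum
      exact fun i _ => hX i
    have hind : IndepFun (X j) (fun ω => ∑ i ∈ t, X i ω) μ := by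
      have := hindep.indepFun_finsetSum_of_notMem hX hnotmem
      have h2 : (∑ i ∈ t, X i) = (fun ω => ∑ i ∈ t, X i ω) := by
        ext ω; simp
      rw [h2] at this
      exact this.symm
    have := gaussian_add_indep (hX j) hsum hind (hlaw j) ih
    simp_rw [Finset.sum_insert hnotmem]
    exact this

open MeasureTheory ProbabilityTheory Real
open scoped ENNReal NNReal

lemma exp_neg98_lb : (0.3218:ℝ) ≤ Real.exp (-(9:ℝ)/8) := by
  have h18 : Real.exp ((1:ℝ)/8) ≤ 8/7 := by
    have h := Real.add_one_le_exp (-(1:ℝ)/8)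
    have h2 : (7:ℝ)/8 ≤ Real.exp (-(1:ℝ)/8) := by linarith
    have h3 := inv_anti₀ (by norm_num : (0:ℝ) < 7/8) h2
    rw [← Real.exp_neg] at h3
    calc Real.exp ((1:ℝ)/8) = Real.exp (-(-(1:ℝ)/8)) := by norm_num
      _ ≤ (7/8:ℝ)⁻¹ := h3
      _ = 8/7 := by norm_num
  have h98 : Real.exp ((9:ℝ)/8) ≤ 2.7182818286 * (8/7) := by
    have : Real.exp ((9:ℝ)/8) = Real.exp 1 * Real.exp ((1:ℝ)/8) := by
      rw [← Real.exp_add]; norm_num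
    rw [this]
    exact mul_le_mul Real.exp_one_lt_d9.le h18 (Real.exp_nonneg _) (by norm_num)
  have hpos : (0:ℝ) < Real.exp ((9:ℝ)/8) := Real.exp_pos _
  have := inv_anti₀ hpos h98
  rw [← Real.exp_neg] at this
  calc (0.3218:ℝ) ≤ (2.7182818286 * (8/7))⁻¹ := by norm_num
    _ ≤ Real.exp (-((9:ℝ)/8)) := this
    _ = Real.exp (-(9:ℝ)/8) := by norm_num

lemma gauss_tail_one :
    ENNReal.ofReal (1 / (4 * Real.sqrt (Real.exp 1 * Real.pi)))
      ≤ gaussianReal 0 1 (Set.Ici (1:ℝ)) := by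
  rw [gaussianReal_apply_eq_integral 0 one_ne_zero]
  apply ENNReal.ofReal_le_ofReal
  have hnn : ∀ x : ℝ, 0 ≤ gaussianPDFReal 0 1 x := gaussianPDFReal_nonneg 0 1
  have hsub : ∫ x in Set.Icc (1:ℝ) 2, gaussianPDFReal 0 1 x
      ≤ ∫ x in Set.Ici (1:ℝ), gaussianPDFReal 0 1 x := by
    apply setIntegral_mono_set (integrable_gaussianPDFReal 0 1).restrict
      (ae_of_all _ hnn)
    exact HasSubset.Subset.eventuallyLE (fun x hx => hx.1)
  refine le_trans ?_ hsub
  have hpt : ∀ x : ℝ, (Real.sqrt (2 * π))⁻¹ * (Real.exp (-(9:ℝ)/8) * (17/8 - x^2/2))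
      ≤ gaussianPDFReal 0 1 x := by
    intro x
    unfold gaussianPDFReal
    push_cast
    have h1 : Real.exp (-(9:ℝ)/8) * (17/8 - x^2/2) ≤ rexp (-(x - 0)^2 / (2*1)) := by
      have h2 : (17:ℝ)/8 - x^2/2 = (9/8 - x^2/2) + 1 := by ring
      have h3 := Real.add_one_le_exp ((9:ℝ)/8 - x^2/2)
      calc Real.exp (-(9:ℝ)/8) * (17/8 - x^2/2)
          ≤ Real.exp (-(9:ℝ)/8) * Real.exp (9/8 - x^2/2) := by
            rw [h2]
            exact mul_le_mul_of_nonneg_left h3 (Real.exp_nonneg _)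
        _ = rexp (-(x - 0)^2 / (2*1)) := by
            rw [← Real.exp_add]
            congr 1
            ring
    calc (Real.sqrt (2 * π))⁻¹ * (Real.exp (-(9:ℝ)/8) * (17/8 - x^2/2))
        ≤ (Real.sqrt (2 * π))⁻¹ * rexp (-(x - 0)^2 / (2*1)) := by
          apply mul_le_mul_of_nonneg_left h1 (by positivity)
      _ = (Real.sqrt (2 * π * 1))⁻¹ * rexp (-(x - 0)^2 / (2*1)) := by norm_num
  have hint : ∫ x in Set.Icc (1:ℝ) 2,
      (Real.sqrt (2 * π))⁻¹ * (Real.exp (-(9:ℝ)/8) * (17/8 - x^2/2))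
      ≤ ∫ x in Set.Icc (1:ℝ) 2, gaussianPDFReal 0 1 x := by
    apply setIntegral_mono_on
    · exact Continuous.integrableOn_Icc (by fun_prop)
    · exact (integrable_gaussianPDFReal 0 1).restrict
    · exact measurableSet_Icc
    · exact fun x _ => hpt x
  refine le_trans ?_ hint
  have hcalc : ∫ x in Set.Icc (1:ℝ) 2,
      (Real.sqrt (2 * π))⁻¹ * (Real.exp (-(9:ℝ)/8) * (17/8 - x^2/2))
      = (Real.sqrt (2 * π))⁻¹ * (Real.exp (-(9:ℝ)/8) * (23/24)) := by
    rw [MeasureTheory.integral_Icc_eq_integral_Ioc,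
      ← intervalIntegral.integral_of_le (by norm_num : (1:ℝ) ≤ 2),
      intervalIntegral.integral_const_mul, intervalIntegral.integral_const_mul]
    have h1 : ∫ x in (1:ℝ)..2, ((17:ℝ)/8 - x^2/2)
        = (∫ _x in (1:ℝ)..2, ((17:ℝ)/8)) - ∫ x in (1:ℝ)..2, x^2/2 :=
      intervalIntegral.integral_sub intervalIntegrable_const
        ((intervalIntegral.intervalIntegrable_pow 2).div_const 2)
    rw [h1, intervalIntegral.integral_const, intervalIntegral.integral_div, integral_pow]
    norm_num
  rw [hcalc]
  -- numeric inequality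
  have hpi1 : (3.141:ℝ) ≤ π := by
    have := Real.pi_gt_d6
    linarith
  have hpi2 : π ≤ 3.15 := Real.pi_lt_d2.le
  have he1 : (2.7182818283:ℝ) ≤ Real.exp 1 := Real.exp_one_gt_d9.le
  have hs1 : Real.sqrt (2 * π) ≤ 2.51 := by
    rw [Real.sqrt_le_iff]
    constructor
    · norm_num
    · nlinarith
  have hs2 : (2.92:ℝ) ≤ Real.sqrt (Real.exp 1 * π) := by
    rw [Real.le_sqrt (by norm_num) (by positivity)]
    nlinarith
  have he98 := exp_neg98_lb
  have hs1pos : (0:ℝ) < Real.sqrt (2 * π) := by positivity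
  calc (1:ℝ) / (4 * Real.sqrt (Real.exp 1 * π))
      ≤ 1 / (4 * 2.92) := by
        apply one_div_le_one_div_of_le (by norm_num)
        linarith
    _ ≤ (2.51:ℝ)⁻¹ * (0.3218 * (23/24)) := by norm_num
    _ ≤ (Real.sqrt (2 * π))⁻¹ * (Real.exp (-(9:ℝ)/8) * (23/24)) := by
        apply mul_le_mul
        · exact inv_anti₀ hs1pos hs1
        · exact mul_le_mul_of_nonneg_right he98 (by norm_num)
        · positivity
        · positivity

lemma dot_cs (d : ℕ) (p q : Fin d → ℝ) :
    p ⬝ᵥ q ≤ Real.sqrt (p ⬝ᵥ p) * Real.sqrt (q ⬝ᵥ q) := by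
  have h1 : ∀ r : Fin d → ℝ, r ⬝ᵥ r = ∑ i, r i ^ 2 := by
    intro r
    simp [dotProduct, pow_two]
  rw [h1, h1]
  exact Real.sum_mul_le_sqrt_mul_sqrt Finset.univ p q

end Aux

/-- **Optimism with constant probability (Lemma for randomized exploration).** -/
theorem randomized_optimism
    {d : ℕ} {Ω : Type*} [MeasurableSpace Ω] (μ : Measure Ω) [IsProbabilityMeasure μ]
    (f : (Fin d → ℝ) → ℝ) (hfcont : Continuous f) (hfconv : ConvexOn ℝ Set.univ f)
    (V A : Matrix (Fin d) (Fin d) ℝ) (hV : V.PosDef) (hA : A * A.transpose = V⁻¹)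
    (θ₀ : Fin d → ℝ) {b : ℝ} (hb : 0 < b)
    (z : Ω → Fin d → ℝ) (hzmeas : Measurable z)
    (hindep : iIndepFun
      (fun i ω => z ω i) μ)
    (hlaw : ∀ i : Fin d, Measure.map (fun ω => z ω i) μ = gaussianReal 0 1) :
    ENNReal.ofReal (1 / (4 * Real.sqrt (Real.exp 1 * Real.pi)))
      ≤ μ {ω | ∀ θ : Fin d → ℝ, Real.sqrt ((θ - θ₀) ⬝ᵥ V.mulVec (θ - θ₀)) ≤ b →
            f θ ≤ f (θ₀ + b • A.mulVec (z ω))} := by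
  classical
  -- A is invertible
  have hVdet : IsUnit V.det := hV.det_pos.ne'.isUnit
  have hVinvPD : (V⁻¹).PosDef := hV.inv
  have hAAT : (A * Aᵀ).PosDef := by rw [hA]; exact hVinvPD
  have hdetA : IsUnit A.det := by
    have h := hAAT.det_pos
    rw [Matrix.det_mul, Matrix.det_transpose] at h
    have : A.det ≠ 0 := by
      intro h0
      rw [h0, mul_zero] at h
      exact lt_irrefl 0 h
    exact this.isUnit
  set B := A⁻¹ with hB
  have hAB : A * B = 1 := Matrix.mul_nonsing_inv A hdetA
  have hBA : B * A = 1 := Matrix.nonsing_inv_mul A hdetA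
  have hVBB : V = Bᵀ * B := by
    have h1 : V⁻¹⁻¹ = V := Matrix.nonsing_inv_nonsing_inv V hVdet
    rw [← h1, ← hA, Matrix.mul_inv_rev, ← Matrix.transpose_nonsing_inv]
  have hquad : ∀ x : Fin d → ℝ, x ⬝ᵥ V.mulVec x = (B.mulVec x) ⬝ᵥ (B.mulVec x) := by
    intro x
    rw [hVBB, ← Matrix.mulVec_mulVec, Matrix.dotProduct_mulVec, Matrix.vecMul_transpose]
  -- the ellipsoid is compact
  set E : Set (Fin d → ℝ) := {θ | Real.sqrt ((θ - θ₀) ⬝ᵥ V.mulVec (θ - θ₀)) ≤ b} with hE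
  have hsum_sq : ∀ r : Fin d → ℝ, r ⬝ᵥ r = ∑ i, r i ^ 2 := by
    intro r
    simp [dotProduct, pow_two]
  have hEeq : E = (fun y : EuclideanSpace ℝ (Fin d) => θ₀ + A.mulVec y) ''
      (Metric.closedBall 0 b) := by
    ext θ
    constructor
    · intro hθ
      refine ⟨WithLp.toLp 2 (B.mulVec (θ - θ₀)), ?_, ?_⟩
      · rw [Metric.mem_closedBall, dist_zero_right, EuclideanSpace.norm_eq]
        simp only [Real.norm_eq_abs, sq_abs, PiLp.toLp_apply]
        rw [← hsum_sq, ← hquad]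
        exact hθ
      · show θ₀ + A.mulVec (B.mulVec (θ - θ₀)) = θ
        rw [Matrix.mulVec_mulVec, hAB, Matrix.one_mulVec]
        abel
    · rintro ⟨y, hy, rfl⟩
      show Real.sqrt ((θ₀ + A.mulVec y - θ₀) ⬝ᵥ V.mulVec (θ₀ + A.mulVec y - θ₀)) ≤ b
      have h1 : θ₀ + A.mulVec y - θ₀ = A.mulVec y := by abel
      rw [h1, hquad, Matrix.mulVec_mulVec, hBA, Matrix.one_mulVec, hsum_sq]
      rw [Metric.mem_closedBall, dist_zero_right, EuclideanSpace.norm_eq] at hy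
      simpa only [Real.norm_eq_abs, sq_abs] using hy
  have hEcompact : IsCompact E := by
    rw [hEeq]
    apply IsCompact.image (isCompact_closedBall (0 : EuclideanSpace ℝ (Fin d)) b)
    have : Continuous (fun y : EuclideanSpace ℝ (Fin d) => A.mulVec y) := by
      exact A.mulVecLin.continuous_of_finiteDimensional.comp
        (EuclideanSpace.equiv (Fin d) ℝ).continuous
    exact continuous_const.add this
  have hθ₀E : θ₀ ∈ E := by
    show Real.sqrt ((θ₀ - θ₀) ⬝ᵥ V.mulVec (θ₀ - θ₀)) ≤ b
    rw [sub_self, zero_dotProduct, Real.sqrt_zero]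
    exact hb.le
  obtain ⟨θs, hθsE, hθsmax⟩ := hEcompact.exists_isMaxOn ⟨θ₀, hθ₀E⟩ hfcont.continuousOn
  set M := f θs with hM
  -- separating functional
  have hconvlt : Convex ℝ {θ : Fin d → ℝ | f θ < M} := by
    have := hfconv.convex_lt M
    simpa using this
  have hnotmem : θs ∉ {θ : Fin d → ℝ | f θ < M} := by
    simp [Set.mem_setOf_eq, hM]
  obtain ⟨g, hg⟩ := geometric_hahn_banach_open_point hconvlt
    (isOpen_lt hfcont continuous_const) hnotmem
  set w : Fin d → ℝ := fun i => g (fun j => if i = j then 1 else 0) with hw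
  have hgw : ∀ x : Fin d → ℝ, g x = w ⬝ᵥ x := by
    intro x
    conv_lhs => rw [pi_eq_sum_univ x]
    rw [map_sum]
    simp only [_root_.map_smul, smul_eq_mul]
    simp [dotProduct, hw, mul_comm]
  set u : Fin d → ℝ := Aᵀ.mulVec w with hu
  have hwA : ∀ y : Fin d → ℝ, w ⬝ᵥ (A.mulVec y) = u ⬝ᵥ y := by
    intro y
    rw [Matrix.dotProduct_mulVec, hu, Matrix.mulVec_transpose]
  have hkey : g θs - g θ₀ ≤ b * Real.sqrt (u ⬝ᵥ u) := by
    have hx : θs - θ₀ = A.mulVec (B.mulVec (θs - θ₀)) := by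
      rw [Matrix.mulVec_mulVec, hAB, Matrix.one_mulVec]
    calc g θs - g θ₀ = g (θs - θ₀) := by rw [map_sub]
      _ = w ⬝ᵥ (θs - θ₀) := hgw _
      _ = u ⬝ᵥ (B.mulVec (θs - θ₀)) := by
          conv_lhs => rw [hx]
          exact hwA _
      _ ≤ Real.sqrt (u ⬝ᵥ u)
          * Real.sqrt ((B.mulVec (θs - θ₀)) ⬝ᵥ (B.mulVec (θs - θ₀))) := dot_cs d _ _
      _ = Real.sqrt (u ⬝ᵥ u) * Real.sqrt ((θs - θ₀) ⬝ᵥ V.mulVec (θs - θ₀)) := by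
          rw [← hquad]
      _ ≤ Real.sqrt (u ⬝ᵥ u) * b := by
          apply mul_le_mul_of_nonneg_left hθsE (Real.sqrt_nonneg _)
      _ = b * Real.sqrt (u ⬝ᵥ u) := mul_comm _ _
  -- the optimism event
  set W : Ω → ℝ := fun ω => u ⬝ᵥ z ω with hWdef
  have hWmeas : Measurable W := by
    have : W = fun ω => ∑ i, u i * z ω i := rfl
    rw [this]
    exact Finset.measurable_sum _
      (fun i _ => ((measurable_pi_apply i).comp hzmeas).const_mul (u i))
  have hincl : {ω | Real.sqrt (u ⬝ᵥ u) ≤ W ω}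
      ⊆ {ω | ∀ θ : Fin d → ℝ, Real.sqrt ((θ - θ₀) ⬝ᵥ V.mulVec (θ - θ₀)) ≤ b →
            f θ ≤ f (θ₀ + b • A.mulVec (z ω))} := by
    intro ω hω θ hθ
    have hfθ : f θ ≤ M := hθsmax hθ
    refine le_trans hfθ ?_
    by_contra hlt
    push_neg at hlt
    have hin : (θ₀ + b • A.mulVec (z ω)) ∈ {θ : Fin d → ℝ | f θ < M} := hlt
    have hglt := hg _ hin
    have hgθ : g (θ₀ + b • A.mulVec (z ω)) = g θ₀ + b * (u ⬝ᵥ z ω) := by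
      rw [map_add, _root_.map_smul, smul_eq_mul]
      congr 1
      rw [hgw (A.mulVec (z ω)), hwA]
    have h2 : b * Real.sqrt (u ⬝ᵥ u) ≤ b * (u ⬝ᵥ z ω) :=
      mul_le_mul_of_nonneg_left hω hb.le
    have : g θs ≤ g (θ₀ + b • A.mulVec (z ω)) := by
      rw [hgθ]
      linarith
    linarith
  refine le_trans ?_ (measure_mono hincl)
  -- law of W
  set va : Fin d → ℝ≥0 := fun i => ⟨u i ^ 2, sq_nonneg _⟩ with hva
  have hXmeas : ∀ i, Measurable (fun ω => u i * z ω i) :=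
    fun i => ((measurable_pi_apply i).comp hzmeas).const_mul (u i)
  have hXindep : iIndepFun
      (fun i ω => u i * z ω i) μ := by
    have := hindep.comp (fun i (x : ℝ) => u i * x) (fun i => measurable_const_mul (u i))
    exact this
  have hXlaw : ∀ i, Measure.map (fun ω => u i * z ω i) μ = gaussianReal 0 (va i) := by
    intro i
    have h1 : (fun ω => u i * z ω i) = (fun x => u i * x) ∘ (fun ω => z ω i) := rfl
    have hzi : Measurable (fun ω => z ω i) := (measurable_pi_apply i).comp hzmeas
    rw [h1, ← Measure.map_map (measurable_const_mul (u i)) hzi, hlaw i,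
      gaussianReal_map_const_mul]
    congr 1
    · simp
    · simp [hva]; rfl
  have hWlaw : Measure.map W μ = gaussianReal 0 (∑ i, va i) := by
    have h := gaussian_sum _ hXmeas hXindep va hXlaw Finset.univ
    have h2 : W = fun ω => ∑ i, u i * z ω i := rfl
    rw [h2]
    exact h
  set σ2 : NNReal := ∑ i, va i with hσ2def
  have hσ2 : ((σ2 : NNReal) : ℝ) = u ⬝ᵥ u := by
    rw [hσ2def, NNReal.coe_sum, hsum_sq]
    rfl
  have hev : {ω | Real.sqrt (u ⬝ᵥ u) ≤ W ω} = W ⁻¹' (Set.Ici (Real.sqrt (u ⬝ᵥ u))) := rfl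
  rw [hev, ← Measure.map_apply hWmeas measurableSet_Ici, hWlaw]
  by_cases hσ0 : σ2 = 0
  · rw [hσ0, gaussianReal_zero_var]
    have h0 : Real.sqrt (u ⬝ᵥ u) = 0 := by
      rw [← hσ2, hσ0]
      simp
    rw [h0]
    have : (Measure.dirac (0:ℝ)) (Set.Ici (0:ℝ)) = 1 := by
      rw [Measure.dirac_apply' _ measurableSet_Ici]
      simp
    rw [this]
    apply ENNReal.ofReal_le_one.mpr
    rw [div_le_one (by positivity)]
    have h1 : (1:ℝ) ≤ Real.sqrt (Real.exp 1 * Real.pi) := by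
      rw [Real.le_sqrt (by norm_num) (by positivity)]
      nlinarith [Real.exp_one_gt_d9.le, Real.pi_gt_d6]
    linarith
  · have hσpos : (0:ℝ) < (σ2:ℝ) := by
      have := σ2.coe_nonneg
      rcases lt_or_eq_of_le this with h | h
      · exact h
      · exact absurd (by exact_mod_cast h.symm) hσ0
    have hsqpos : 0 < Real.sqrt ((σ2:ℝ)) := Real.sqrt_pos.mpr hσpos
    have hmap : gaussianReal 0 σ2
        = Measure.map (fun x => Real.sqrt ((σ2:ℝ)) * x) (gaussianReal 0 1) := by
      rw [show (fun x : ℝ => Real.sqrt ((σ2:ℝ)) * x) = (Real.sqrt ((σ2:ℝ)) * ·) from rfl,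
        gaussianReal_map_const_mul]
      congr 1
      · simp
      · rw [mul_one]
        ext
        simp [Real.sq_sqrt σ2.coe_nonneg]
    rw [hmap, Measure.map_apply (measurable_const_mul _) measurableSet_Ici]
    have hpre : (fun x => Real.sqrt ((σ2:ℝ)) * x) ⁻¹' (Set.Ici (Real.sqrt (u ⬝ᵥ u)))
        = Set.Ici (1:ℝ) := by
      ext x
      simp only [Set.mem_preimage, Set.mem_Ici, ← hσ2]
      constructor
      · intro h
        nlinarith
      · intro h
        nlinarith
    rw [hpre]
    exact gauss_tail_one
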